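/- Let Y be a non-empty compact Hausdorff space. Then there exist a compact Hausdorff space Z and a dense subset D of Z such that the subspace topology on D is discrete and the remainder Z \ D (with its subspace topology) is homeomorphic to Y. (Equivalently: every non-empty compact Hausdorff space Y arises as the remainder of a Hausdorff compactification of some discrete space.) -/

import Mathlib

universe u

open Set OnePoint

namespace Stmt8Aux

/-- The underlying type of the compactification: a copy of `Y × (ℕ ∪ {∞})`. -/
structure ZP (Y : Type u) : Type u where
  y : Y
  n : OnePoint ℕ

variable {Y : Type u} [TopologicalSpace Y]

theorem ZP.ext_iff' {a b : ZP Y} : a = b ↔ a.y = b.y ∧ a.n = b.n := by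
  cases a; cases b; simp [ZP.mk.injEq]

/-- Topology: a set `W` is open iff for every point `(a,∞) ∈ W` there is an open
`U ∋ a` such that `U × (ℕ ∪ {∞})` is contained in `W` up to a finite set. -/
instance : TopologicalSpace (ZP Y) where
  IsOpen W := ∀ a : Y, ZP.mk a ∞ ∈ W →
    ∃ U : Set Y, IsOpen U ∧ a ∈ U ∧ {z : ZP Y | z.y ∈ U ∧ z ∉ W}.Finite
  isOpen_univ := fun a _ => ⟨univ, isOpen_univ, trivial, by simp⟩
  isOpen_inter := by
    intro s t hs ht a ha
    obtain ⟨U, hU, haU, hUf⟩ := hs a ha.1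
    obtain ⟨V, hV, haV, hVf⟩ := ht a ha.2
    refine ⟨U ∩ V, hU.inter hV, ⟨haU, haV⟩, (hUf.union hVf).subset ?_⟩
    rintro z ⟨⟨h1, h2⟩, h3⟩
    by_cases hz : z ∈ s
    · exact Or.inr ⟨h2, fun hzt => h3 ⟨hz, hzt⟩⟩
    · exact Or.inl ⟨h1, hz⟩
  isOpen_sUnion := by
    intro S hS a ha
    obtain ⟨W, hWS, haW⟩ := ha
    obtain ⟨U, hU, haU, hUf⟩ := hS W hWS a haW
    refine ⟨U, hU, haU, hUf.subset ?_⟩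
    rintro z ⟨h1, h2⟩
    exact ⟨h1, fun hz => h2 ⟨W, hWS, hz⟩⟩

theorem isOpen_iff {W : Set (ZP Y)} : IsOpen W ↔ ∀ a : Y, ZP.mk a ∞ ∈ W →
    ∃ U : Set Y, IsOpen U ∧ a ∈ U ∧ {z : ZP Y | z.y ∈ U ∧ z ∉ W}.Finite := Iff.rfl

/-- Any set of "finite-coordinate" points is open. -/
theorem isOpen_of_ne_infty {W : Set (ZP Y)} (h : ∀ z ∈ W, z.n ≠ ∞) : IsOpen W := by
  intro a ha
  exact absurd rfl (h _ ha)

/-- The complement of a finite set of finite-coordinate points is open. -/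
theorem isOpen_compl_finite {F : Set (ZP Y)} (hF : F.Finite) (h : ∀ z ∈ F, z.n ≠ ∞) :
    IsOpen Fᶜ := by
  intro a ha
  exact ⟨univ, isOpen_univ, trivial, hF.subset (by intro z hz; simpa using hz.2)⟩

/-- The preimage of an open set under the first projection is open. -/
theorem isOpen_tube {U : Set Y} (hU : IsOpen U) : IsOpen {z : ZP Y | z.y ∈ U} := by
  intro a ha
  exact ⟨U, hU, ha, by simp⟩

instance [T2Space Y] : T2Space (ZP Y) := by
  refine ⟨fun x z hxz => ?_⟩
  by_cases hx : x.n = ∞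
  · by_cases hz : z.n = ∞
    · have hy : x.y ≠ z.y := by
        intro h; exact hxz (ZP.ext_iff'.2 ⟨h, hx.trans hz.symm⟩)
      obtain ⟨U, V, hU, hV, hxU, hzV, hUV⟩ := t2_separation hy
      refine ⟨{w : ZP Y | w.y ∈ U}, {w : ZP Y | w.y ∈ V}, isOpen_tube hU,
        isOpen_tube hV, hxU, hzV, ?_⟩
      rw [Set.disjoint_left]
      intro w hw hw'
      exact (Set.disjoint_left.1 hUV) hw hw'
    · refine ⟨{z}ᶜ, {z}, isOpen_compl_finite (finite_singleton z) ?_,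
        isOpen_of_ne_infty ?_, hxz, rfl, ?_⟩
      · intro w hw; rw [mem_singleton_iff] at hw; subst hw; exact hz
      · intro w hw; rw [mem_singleton_iff] at hw; subst hw; exact hz
      · simp
  · refine ⟨{x}, {x}ᶜ, isOpen_of_ne_infty ?_, isOpen_compl_finite (finite_singleton x) ?_,
      rfl, fun h => hxz (mem_singleton_iff.1 h).symm, ?_⟩
    · intro w hw; rw [mem_singleton_iff] at hw; subst hw; exact hx
    · intro w hw; rw [mem_singleton_iff] at hw; subst hw; exact hx
    · simp

instance [CompactSpace Y] : CompactSpace (ZP Y) := by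
  constructor
  refine isCompact_of_finite_subcover fun {ι} W hW hcov => ?_
  -- for each `a : Y` pick a cover member containing `(a, ∞)` and its tube data
  have hsel : ∀ a : Y, ∃ i : ι, ∃ U : Set Y, IsOpen U ∧ a ∈ U ∧
      {z : ZP Y | z.y ∈ U ∧ z ∉ W i}.Finite := by
    intro a
    obtain ⟨i, hi⟩ := mem_iUnion.1 (hcov (mem_univ (ZP.mk a ∞)))
    obtain ⟨U, hU, haU, hUf⟩ := (hW i) a hi
    exact ⟨i, U, hU, haU, hUf⟩
  choose idx U hUopen hmem hfin using hsel
  obtain ⟨t, ht⟩ := isCompact_univ.elim_finite_subcover U hUopen (fun a _ => mem_iUnion.2 ⟨a, hmem a⟩)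
  -- leftover points
  set K : Set (ZP Y) := ⋃ a ∈ t, {z : ZP Y | z.y ∈ U a ∧ z ∉ W (idx a)} with hK
  have hKfin : K.Finite := Set.Finite.biUnion t.finite_toSet (fun a _ => hfin a)
  have hjall : ∀ z : ZP Y, ∃ j : ι, z ∈ W j := fun z => mem_iUnion.1 (hcov (mem_univ z))
  choose j hj using hjall
  classical
  refine ⟨t.image idx ∪ hKfin.toFinset.image j, fun z _ => ?_⟩
  obtain ⟨a, hat, hzU⟩ := mem_iUnion₂.1 (ht (mem_univ z.y))
  by_cases hzW : z ∈ W (idx a)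
  · exact mem_iUnion₂.2 ⟨idx a, Finset.mem_union_left _ (Finset.mem_image_of_mem idx hat), hzW⟩
  · have hzK : z ∈ K := mem_iUnion₂.2 ⟨a, hat, hzU, hzW⟩
    refine mem_iUnion₂.2 ⟨j z, Finset.mem_union_right _ ?_, hj z⟩
    exact Finset.mem_image_of_mem j (hKfin.mem_toFinset.2 hzK)

theorem continuous_y : Continuous (fun z : ZP Y => z.y) := by
  rw [continuous_def]
  intro U hU
  exact isOpen_tube hU

theorem continuous_mk_infty [T1Space Y] :
    Continuous (fun a : Y => ZP.mk a ∞) := by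
  rw [continuous_def]
  intro W hW
  rw [isOpen_iff_forall_mem_open]
  intro a ha
  obtain ⟨U, hU, haU, hSf⟩ := hW a ha
  set S : Set (ZP Y) := {z : ZP Y | z.y ∈ U ∧ z ∉ W} ∩ {z : ZP Y | z.n = ∞} with hS
  refine ⟨U \ (ZP.y '' S), ?_, ?_, ?_⟩
  · intro b hb
    by_contra hbW
    exact hb.2 ⟨ZP.mk b ∞, ⟨⟨hb.1, hbW⟩, rfl⟩, rfl⟩
  · exact hU.sdiff (((hSf.inter_of_left _).image _).isClosed)
  · refine ⟨haU, ?_⟩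
    rintro ⟨z, ⟨⟨_, hzW⟩, hzn⟩, hzy⟩
    exact hzW (by rw [show z = ZP.mk a ∞ from ZP.ext_iff'.2 ⟨hzy, hzn⟩]; exact ha)

theorem dense_finite_part : Dense {z : ZP Y | z.n ≠ ∞} := by
  rw [dense_iff_inter_open]
  rintro W hW ⟨z, hz⟩
  by_cases hzn : z.n = ∞
  · obtain ⟨U, hU, haU, hSf⟩ := hW z.y (by
      have : ZP.mk z.y ∞ = z := ZP.ext_iff'.2 ⟨rfl, hzn.symm⟩
      rwa [this])
    have hfin : {m : ℕ | ZP.mk z.y (↑m) ∈ {w : ZP Y | w.y ∈ U ∧ w ∉ W}}.Finite := by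
      refine Set.Finite.preimage ?_ hSf
      intro m _ m' _ h
      simpa using congrArg ZP.n h
    obtain ⟨m, hm⟩ := (hfin.infinite_compl).nonempty
    refine ⟨ZP.mk z.y (↑m), ?_, ?_⟩
    · by_contra hmW
      exact hm ⟨haU, hmW⟩
    · simp
  · exact ⟨z, hz, hzn⟩

end Stmt8Aux

/-- Let `Y` be a non-empty compact Hausdorff space.  Then there exist
a compact Hausdorff space `Z` and a dense subset `D` of `Z` such that the subspace
topology on `D` is discrete and the remainder `Z \ D` (with its subspace topology) is
homeomorphic to `Y`.  (Every non-empty compact Hausdorff space is the remainder of a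
Hausdorff compactification of some discrete space.) -/
theorem exists_compactification_of_discrete_with_remainder
    (Y : Type u) [TopologicalSpace Y] [CompactSpace Y] [T2Space Y] [Nonempty Y] :
    ∃ (Z : Type u) (_ : TopologicalSpace Z) (D : Set Z),
      CompactSpace Z ∧ T2Space Z ∧ Dense D ∧ DiscreteTopology D ∧
        Nonempty ((Dᶜ : Set Z) ≃ₜ Y) := by
  classical
  refine ⟨Stmt8Aux.ZP Y, inferInstance, {z : Stmt8Aux.ZP Y | z.n ≠ ∞},
    inferInstance, inferInstance, Stmt8Aux.dense_finite_part, ?_, ⟨?_⟩⟩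
  · rw [discreteTopology_iff_isOpen_singleton]
    rintro ⟨z, hz⟩
    have h1 : IsOpen {z} := Stmt8Aux.isOpen_of_ne_infty (by rintro w rfl; exact hz)
    have : ({⟨z, hz⟩} : Set {w : Stmt8Aux.ZP Y | w.n ≠ ∞}) =
        Subtype.val ⁻¹' ({z} : Set (Stmt8Aux.ZP Y)) := by
      ext w; simp [Subtype.ext_iff]
    rw [this]
    exact h1.preimage continuous_subtype_val
  · refine Homeomorph.mk ⟨fun z => z.val.y, fun a => ⟨Stmt8Aux.ZP.mk a ∞, by simp⟩,
      ?_, ?_⟩ ?_ ?_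
    · rintro ⟨z, hz⟩
      simp only [Set.mem_compl_iff, Set.mem_setOf_eq, not_not] at hz
      exact Subtype.ext (Stmt8Aux.ZP.ext_iff'.2 ⟨rfl, hz.symm⟩)
    · intro a; rfl
    · exact Stmt8Aux.continuous_y.comp continuous_subtype_val
    · exact Continuous.subtype_mk Stmt8Aux.continuous_mk_infty _
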